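/- Let m ≥ 1 and let S ⊆ ℝ^m be a set whose unit secants fill the whole unit sphere: for every v ∈ ℝ^m with ‖v‖ = 1 there exist a, b ∈ S with a ≠ b and (a − b)/‖a − b‖ = v. Then for every finite set U₀ ⊆ ℝ^m of cardinality at most m − 1 there exist a, b ∈ S with a ≠ b such that ⟨a − b, u⟩ = 0 for all u ∈ U₀. In particular, S admits no universal distinguishing set of fewer than m elements for the linear response β(x,u) = f(x)·u with image S. -/
import Mathlib


/-- If the unit secants of `S ⊆ ℝ^m` fill the whole unit sphere, then for every finite set
`U₀ ⊆ ℝ^m` of at most `m − 1` vectors there are two distinct points of `S` whose difference is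
orthogonal to every element of `U₀`; hence no universal distinguishing set has fewer than `m`
elements. -/
theorem no_small_distinguishing_set_of_secants_fill_sphere
    (m : ℕ) (hm : 1 ≤ m) (S : Set (EuclideanSpace ℝ (Fin m)))
    (hsec : ∀ v : EuclideanSpace ℝ (Fin m), ‖v‖ = 1 →
      ∃ a ∈ S, ∃ b ∈ S, a ≠ b ∧ ‖a - b‖⁻¹ • (a - b) = v) :
    ∀ U₀ : Finset (EuclideanSpace ℝ (Fin m)), U₀.card ≤ m - 1 →
      ∃ a ∈ S, ∃ b ∈ S, a ≠ b ∧ ∀ u ∈ U₀, @inner ℝ _ _ (a - b) u = (0 : ℝ) := by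
  intro U₀ hcard
  set K : Submodule ℝ (EuclideanSpace ℝ (Fin m)) := Submodule.span ℝ (U₀ : Set _)
  have hK : Module.finrank ℝ K < m := by
    have h1 : Module.finrank ℝ K ≤ U₀.card :=
      (finrank_span_finset_le_card U₀)
    omega
  have hKne : K ≠ ⊤ := by
    intro h
    rw [h, finrank_top, finrank_euclideanSpace, Fintype.card_fin] at hK
    omega
  have horth : Kᗮ ≠ ⊥ := by
    intro h
    exact hKne (Submodule.orthogonal_eq_bot_iff.mp h)
  obtain ⟨w, hw, hw0⟩ := Submodule.exists_mem_ne_zero_of_ne_bot horth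
  set v := ‖w‖⁻¹ • w with hv
  have hwn : ‖w‖ ≠ 0 := norm_ne_zero_iff.mpr hw0
  have hvnorm : ‖v‖ = 1 := by
    simp [hv, norm_smul, abs_of_nonneg (inv_nonneg.mpr (norm_nonneg w)), inv_mul_cancel₀ hwn]
  obtain ⟨a, ha, b, hb, hab, habv⟩ := hsec v hvnorm
  refine ⟨a, ha, b, hb, hab, fun u hu => ?_⟩
  have hvK : v ∈ Kᗮ := Submodule.smul_mem _ _ hw
  have hdn : ‖a - b‖ ≠ 0 := norm_ne_zero_iff.mpr (sub_ne_zero.mpr hab)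
  have habv' : a - b = ‖a - b‖ • v := by
    rw [← habv, smul_smul, mul_inv_cancel₀ hdn, one_smul]
  have huK : u ∈ K := Submodule.subset_span hu
  have := hvK u huK
  rw [habv', inner_smul_left]
  simp [real_inner_comm v u ▸ this]
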